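/- arXiv:2410.08523 — 2 statements merged into one kernel-verified Lean document; each statement's English description precedes it below -/
import Mathlib

section
/- Let (X,Y) be a pair of square-integrable real random variables and let (X_1,Y_1),...,(X_{n+m}) be such that (X_i,Y_i), i=1..n are i.i.d. copies of (X,Y) and Y_{n+1},...,Y_{n+m} are further i.i.d. copies of Y, all n+m samples mutually independent across indices. For α ∈ ℝ define the multi-fidelity estimator μ̂ = (1/n)∑_{i=1}^n X_i + α((1/(n+m))∑_{i=1}^{n+m} Y_i − (1/n)∑_{i=1}^n Y_i). Then Var(μ̂) = Var(X)/n − 2α m Cov(X,Y)/(n(n+m)) + α² m Var(Y)/(n(n+m)). -/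
open MeasureTheory ProbabilityTheory Real Finset

/-- Covariance of two real random variables. -/
noncomputable def cov {Ω : Type*} [MeasurableSpace Ω] (X Y : Ω → ℝ) (μ : Measure Ω) : ℝ :=
  ∫ ω, (X ω - ∫ x, X x ∂μ) * (Y ω - ∫ x, Y x ∂μ) ∂μ

/-- The multi-fidelity Monte Carlo estimator. -/
noncomputable def mfEst {Ω : Type*} (n m : ℕ) (Xs Ys : ℕ → Ω → ℝ) (α : ℝ) : Ω → ℝ :=
  fun ω => (∑ i ∈ range n, Xs i ω) / n
    + α * ((∑ i ∈ range (n + m), Ys i ω) / (n + m) - (∑ i ∈ range n, Ys i ω) / n)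

lemma variance_comp' {Ω β : Type*} [MeasurableSpace Ω] [MeasurableSpace β] (μ : Measure Ω)
    {T : Ω → β} (hT : Measurable T) {g : β → ℝ} (hg : Measurable g) :
    variance (fun ω => g (T ω)) μ = variance g (μ.map T) := by
  unfold ProbabilityTheory.variance ProbabilityTheory.evariance
  rw [integral_map hT.aemeasurable hg.aestronglyMeasurable,
    lintegral_map (by measurability) hT]

lemma memℒp_two_mul_integrable {Ω : Type*} [MeasurableSpace Ω] {μ : Measure Ω}
    {f g : Ω → ℝ} (hf : MemLp f 2 μ) (hg : MemLp g 2 μ) :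
    Integrable (fun ω => f ω * g ω) μ := by
  have h : MemLp (f • g) 1 μ := hg.smul (𝕜 := ℝ) (p := 2) (q := 2) (r := 1) hf
  exact memLp_one_iff_integrable.1 h

lemma variance_linear_combo {Ω : Type*} [MeasurableSpace Ω] (μ : Measure Ω)
    [IsProbabilityMeasure μ] (X Y : Ω → ℝ) (hX2 : MemLp X 2 μ) (hY2 : MemLp Y 2 μ) (a b : ℝ) :
    variance (fun ω => a * X ω + b * Y ω) μ
      = a ^ 2 * variance X μ + 2 * a * b * cov X Y μ + b ^ 2 * variance Y μ := by
  have hc : MemLp (fun ω => a * X ω + b * Y ω) 2 μ := (hX2.const_mul a).add (hY2.const_mul b)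
  have hXi : Integrable X μ := hX2.integrable one_le_two
  have hYi : Integrable Y μ := hY2.integrable one_le_two
  set EX := ∫ x, X x ∂μ with hEX
  set EY := ∫ x, Y x ∂μ with hEY
  have hmean : ∫ ω, (a * X ω + b * Y ω) ∂μ = a * EX + b * EY := by
    rw [integral_add (hXi.const_mul a) (hYi.const_mul b), integral_const_mul, integral_const_mul]
  have hf : MemLp (fun ω => X ω - EX) 2 μ := hX2.sub (memLp_const EX)
  have hg : MemLp (fun ω => Y ω - EY) 2 μ := hY2.sub (memLp_const EY)
  have hff := memℒp_two_mul_integrable hf hf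
  have hgg := memℒp_two_mul_integrable hg hg
  have hfg := memℒp_two_mul_integrable hf hg
  have hvX : variance X μ = ∫ ω, (X ω - EX) * (X ω - EX) ∂μ := by
    rw [variance_eq_integral hX2.1.aemeasurable]
    refine integral_congr_ae (Filter.Eventually.of_forall fun ω => ?_)
    simp [sq, hEX]
  have hvY : variance Y μ = ∫ ω, (Y ω - EY) * (Y ω - EY) ∂μ := by
    rw [variance_eq_integral hY2.1.aemeasurable]
    refine integral_congr_ae (Filter.Eventually.of_forall fun ω => ?_)
    simp [sq, hEY]
  have hv : variance (fun ω => a * X ω + b * Y ω) μ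
      = ∫ ω, (a ^ 2 * ((X ω - EX) * (X ω - EX)) + b ^ 2 * ((Y ω - EY) * (Y ω - EY))
          + 2 * a * b * ((X ω - EX) * (Y ω - EY))) ∂μ := by
    rw [variance_eq_integral hc.1.aemeasurable]
    refine integral_congr_ae (Filter.Eventually.of_forall fun ω => ?_)
    simp only [Pi.pow_apply, Pi.sub_apply, hmean]
    ring
  have h1 : Integrable (fun ω => a ^ 2 * ((X ω - EX) * (X ω - EX))
      + b ^ 2 * ((Y ω - EY) * (Y ω - EY))) μ := (hff.const_mul _).add (hgg.const_mul _)
  have h2 : Integrable (fun ω => a ^ 2 * ((X ω - EX) * (X ω - EX))) μ := hff.const_mul _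
  have h3 : Integrable (fun ω => b ^ 2 * ((Y ω - EY) * (Y ω - EY))) μ := hgg.const_mul _
  have h4 : Integrable (fun ω => 2 * a * b * ((X ω - EX) * (Y ω - EY))) μ := hfg.const_mul _
  rw [hv, integral_add h1 h4, integral_add h2 h3,
    integral_const_mul, integral_const_mul, integral_const_mul, hvX, hvY]
  unfold cov
  rw [← hEX, ← hEY]
  ring

theorem mfmc_variance {Ω : Type*} [MeasurableSpace Ω] (μ : Measure Ω) [IsProbabilityMeasure μ]
    (n m : ℕ) (hn : 0 < n) (hm : 0 < m)
    (X Y : Ω → ℝ) (Xs Ys : ℕ → Ω → ℝ)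
    (hX : Measurable X) (hY : Measurable Y)
    (hXs : ∀ i, Measurable (Xs i)) (hYs : ∀ i, Measurable (Ys i))
    (hX2 : MemLp X 2 μ) (hY2 : MemLp Y 2 μ)
    (hpair : ∀ i < n, Measure.map (fun ω => (Xs i ω, Ys i ω)) μ
        = Measure.map (fun ω => (X ω, Y ω)) μ)
    (hYlaw : ∀ i < n + m, Measure.map (Ys i) μ = Measure.map Y μ)
    (hindep : iIndepFun
        (fun i : Fin (n + m) => fun ω => (Xs i ω, Ys i ω)) μ)
    (α : ℝ) :
    variance (mfEst n m Xs Ys α) μ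
      = variance X μ / n - 2 * α * m * cov X Y μ / (n * (n + m))
          + α ^ 2 * m * variance Y μ / (n * (n + m)) := by
  classical
  have hn0 : (n : ℝ) ≠ 0 := Nat.cast_ne_zero.2 hn.ne'
  have hnm0 : ((n : ℝ) + m) ≠ 0 := by positivity
  set a : ℝ := 1 / n with ha
  set b : ℝ := α * (1 / ((n : ℝ) + m) - 1 / n) with hb
  set c : ℝ := α / ((n : ℝ) + m) with hc
  set φ : ℕ → ℝ × ℝ → ℝ := fun i p => if i < n then a * p.1 + b * p.2 else c * p.2 with hφdef
  have hφm : ∀ i : ℕ, Measurable (φ i) := by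
    intro i
    have h : φ i = if i < n then (fun p : ℝ × ℝ => a * p.1 + b * p.2)
        else (fun p : ℝ × ℝ => c * p.2) := by
      by_cases h : i < n <;> simp [hφdef, h]
    rw [h]
    split
    · exact (measurable_const.mul measurable_fst).add (measurable_const.mul measurable_snd)
    · exact measurable_const.mul measurable_snd
  set Z : Fin (n + m) → Ω → ℝ := fun i => φ i ∘ (fun ω => (Xs i ω, Ys i ω)) with hZdef
  have hsplit : ∀ f : ℕ → ℝ, ∑ i ∈ range (n + m), f i
      = ∑ i ∈ range n, f i + ∑ i ∈ Finset.Ico n (n + m), f i := by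
    intro f
    rw [range_eq_Ico, range_eq_Ico]
    exact (Finset.sum_Ico_consecutive _ (Nat.zero_le n) (Nat.le_add_right n m)).symm
  -- the estimator as a sum of independent pieces
  have hEq : mfEst n m Xs Ys α = ∑ i : Fin (n + m), Z i := by
    funext ω
    have h1 : (∑ i : Fin (n + m), Z i) ω = ∑ i ∈ range (n + m), φ i (Xs i ω, Ys i ω) := by
      rw [Finset.sum_apply]
      exact Fin.sum_univ_eq_sum_range (fun i => φ i (Xs i ω, Ys i ω)) (n + m)
    have h2 : ∑ i ∈ range n, φ i (Xs i ω, Ys i ω)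
        = ∑ i ∈ range n, (a * Xs i ω + b * Ys i ω) :=
      Finset.sum_congr rfl fun i hi => by simp [hφdef, Finset.mem_range.1 hi]
    have h3 : ∑ i ∈ Finset.Ico n (n + m), φ i (Xs i ω, Ys i ω)
        = ∑ i ∈ Finset.Ico n (n + m), c * Ys i ω :=
      Finset.sum_congr rfl fun i hi => by
        simp [hφdef, Nat.not_lt.2 (Finset.mem_Ico.1 hi).1]
    have h4 : ∑ i ∈ Finset.Ico n (n + m), Ys i ω
        = ∑ i ∈ range (n + m), Ys i ω - ∑ i ∈ range n, Ys i ω := by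
      rw [hsplit (fun i => Ys i ω)]; ring
    rw [h1, hsplit (fun i => φ i (Xs i ω, Ys i ω)), h2, h3, ← Finset.mul_sum, h4,
      Finset.sum_add_distrib, ← Finset.mul_sum, ← Finset.mul_sum]
    simp only [mfEst, ha, hb, hc]
    field_simp
    ring
  have hYs2 : ∀ i : Fin (n + m), MemLp (Ys i) 2 μ := by
    intro i
    have h1 : MemLp (id : ℝ → ℝ) 2 (μ.map (Ys i)) := by
      rw [hYlaw i i.isLt]
      exact (memLp_map_measure_iff aestronglyMeasurable_id hY.aemeasurable).2 hY2
    exact (memLp_map_measure_iff aestronglyMeasurable_id (hYs i).aemeasurable).1 h1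
  have hZ2 : ∀ i : Fin (n + m), MemLp (Z i) 2 μ := by
    intro i
    by_cases h : (i : ℕ) < n
    · have hpm : AEMeasurable (fun ω => (Xs i ω, Ys i ω)) μ :=
        ((hXs i).prodMk (hYs i)).aemeasurable
      have h1 : MemLp (φ i) 2 (μ.map (fun ω => (Xs i ω, Ys i ω))) := by
        rw [hpair i h]
        refine (memLp_map_measure_iff (hφm i).aestronglyMeasurable
          ((hX.prodMk hY).aemeasurable)).2 ?_
        have he : (φ i) ∘ (fun ω => (X ω, Y ω)) = fun ω => a * X ω + b * Y ω := by
          funext ω; simp [hφdef, h]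
        rw [he]
        exact (hX2.const_mul a).add (hY2.const_mul b)
      exact (memLp_map_measure_iff (hφm i).aestronglyMeasurable hpm).1 h1
    · have he : Z i = fun ω => c * Ys i ω := by
        funext ω; simp [hZdef, hφdef, h]
      rw [he]
      exact (hYs2 i).const_mul c
  have hPW : Set.Pairwise ↑(Finset.univ : Finset (Fin (n + m)))
      (fun i j => IndepFun (Z i) (Z j) μ) := by
    intro i _ j _ hij
    exact (hindep.indepFun hij).comp (hφm i) (hφm j)
  have hV1 : ∀ i : Fin (n + m), (i : ℕ) < n → variance (Z i) μ
      = a ^ 2 * variance X μ + 2 * a * b * cov X Y μ + b ^ 2 * variance Y μ := by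
    intro i h
    have e1 : variance (fun ω => φ i (Xs i ω, Ys i ω)) μ
        = variance (φ i) (μ.map (fun ω => (Xs i ω, Ys i ω))) :=
      variance_comp' μ ((hXs i).prodMk (hYs i)) (hφm i)
    have e2 : variance (fun ω => φ i (X ω, Y ω)) μ
        = variance (φ i) (μ.map (fun ω => (X ω, Y ω))) :=
      variance_comp' μ (hX.prodMk hY) (hφm i)
    have e3 : (fun ω => φ i (X ω, Y ω)) = fun ω => a * X ω + b * Y ω := by
      funext ω; simp [hφdef, h]
    have e0 : Z i = fun ω => φ i (Xs i ω, Ys i ω) := rfl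
    rw [e0, e1, hpair i h, ← e2, e3, variance_linear_combo μ X Y hX2 hY2 a b]
  have hV2 : ∀ i : Fin (n + m), ¬ (i : ℕ) < n → variance (Z i) μ = c ^ 2 * variance Y μ := by
    intro i h
    have e0 : Z i = fun ω => c * Ys i ω := by funext ω; simp [hZdef, hφdef, h]
    have hgm : Measurable fun y : ℝ => c * y := measurable_const.mul measurable_id
    have e1 : variance (fun ω => c * Ys i ω) μ = variance (fun y : ℝ => c * y) (μ.map (Ys i)) :=
      variance_comp' μ (hYs i) hgm
    have e2 : variance (fun ω => c * Y ω) μ = variance (fun y : ℝ => c * y) (μ.map Y) :=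
      variance_comp' μ hY hgm
    rw [e0, e1, hYlaw i i.isLt, ← e2, variance_const_mul]
  rw [hEq, IndepFun.variance_sum (fun i _ => hZ2 i) hPW]
  set V1 : ℝ := a ^ 2 * variance X μ + 2 * a * b * cov X Y μ + b ^ 2 * variance Y μ with hV1d
  set V2 : ℝ := c ^ 2 * variance Y μ with hV2d
  have hg : ∀ i : Fin (n + m), variance (Z i) μ = (fun k : ℕ => if k < n then V1 else V2) i := by
    intro i
    by_cases h : (i : ℕ) < n
    · rw [hV1 i h]; simp [h]
    · rw [hV2 i h]; simp [h]
  rw [Finset.sum_congr rfl fun i _ => hg i,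
    Fin.sum_univ_eq_sum_range (fun k => if k < n then V1 else V2) (n + m),
    hsplit (fun k => if k < n then V1 else V2)]
  have hs1 : ∑ i ∈ range n, (if i < n then V1 else V2) = (n : ℝ) * V1 := by
    rw [Finset.sum_congr rfl fun i hi => if_pos (Finset.mem_range.1 hi),
      Finset.sum_const, Finset.card_range, nsmul_eq_mul]
  have hs2 : ∑ i ∈ Finset.Ico n (n + m), (if i < n then V1 else V2) = (m : ℝ) * V2 := by
    rw [Finset.sum_congr rfl fun i hi => if_neg (Nat.not_lt.2 (Finset.mem_Ico.1 hi).1),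
      Finset.sum_const, Nat.card_Ico, Nat.add_sub_cancel_left, nsmul_eq_mul]
  rw [hs1, hs2, hV1d, hV2d, ha, hb, hc]
  field_simp
  ring
end

section
/- With the setup of the multi-fidelity estimator μ̂(α) = (1/n)∑_{i=1}^n X_i + α((1/(n+m))∑_{i=1}^{n+m} Y_i − (1/n)∑_{i=1}^n Y_i), and assuming Var(Y) > 0, the value α_opt = Cov(X,Y)/Var(Y) minimizes the variance of μ̂(α) over α ∈ ℝ, and the minimal variance equals (Var(X)/n)(1 − (m/(n+m))·Corr(X,Y)²). -/
open MeasureTheory ProbabilityTheory Real Finset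

/-- Correlation of two real random variables. -/
noncomputable def corr {Ω : Type*} [MeasurableSpace Ω] (X Y : Ω → ℝ) (μ : Measure Ω) : ℝ :=
  cov X Y μ / (Real.sqrt (variance X μ) * Real.sqrt (variance Y μ))

section Helpers

variable {Ω : Type*} [MeasurableSpace Ω] {μ : Measure Ω}

lemma my_integrable_mul [IsFiniteMeasure μ] {f g : Ω → ℝ}
    (hf : MemLp f 2 μ) (hg : MemLp g 2 μ) :
    Integrable (fun ω => f ω * g ω) μ := by
  have h1 : Integrable (fun ω => (f ω + g ω) ^ 2) μ := by
    have := (hf.add hg).integrable_sq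
    simpa using this
  have h2 := hf.integrable_sq
  have h3 := hg.integrable_sq
  have h := ((h1.sub h2).sub h3).const_mul (1 / 2 : ℝ)
  have : (fun ω => f ω * g ω)
      = fun ω => (1 / 2 : ℝ) * ((f ω + g ω) ^ 2 - f ω ^ 2 - g ω ^ 2) := by
    funext ω; ring
  rw [this]
  exact h

lemma my_var_eq [IsFiniteMeasure μ] {f : Ω → ℝ} (hf : MemLp f 2 μ) :
    variance f μ = ∫ ω, (f ω - ∫ x, f x ∂μ) ^ 2 ∂μ := by
  rw [variance_eq_integral hf.aemeasurable]

lemma my_variance_lin [IsProbabilityMeasure μ] {f g : Ω → ℝ}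
    (hf : MemLp f 2 μ) (hg : MemLp g 2 μ) (a b : ℝ) :
    variance (fun ω => a * f ω + b * g ω) μ
      = a ^ 2 * variance f μ + 2 * a * b * cov f g μ + b ^ 2 * variance g μ := by
  have hfi : Integrable f μ := hf.integrable one_le_two
  have hgi : Integrable g μ := hg.integrable one_le_two
  set Ef := ∫ x, f x ∂μ with hEf
  set Eg := ∫ x, g x ∂μ with hEg
  have hc : MemLp (fun ω => a * f ω + b * g ω) 2 μ := (hf.const_mul a).add (hg.const_mul b)
  have hmean : ∫ ω, (a * f ω + b * g ω) ∂μ = a * Ef + b * Eg := by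
    rw [integral_add (hfi.const_mul a) (hgi.const_mul b), integral_const_mul,
      integral_const_mul]
  have hf' : MemLp (fun ω => f ω - Ef) 2 μ := hf.sub (memLp_const Ef)
  have hg' : MemLp (fun ω => g ω - Eg) 2 μ := hg.sub (memLp_const Eg)
  have h1 : Integrable (fun ω => (f ω - Ef) ^ 2) μ := by simpa using hf'.integrable_sq
  have h2 : Integrable (fun ω => (g ω - Eg) ^ 2) μ := by simpa using hg'.integrable_sq
  have h3 : Integrable (fun ω => (f ω - Ef) * (g ω - Eg)) μ := my_integrable_mul hf' hg'
  rw [my_var_eq hc, my_var_eq hf, my_var_eq hg, hmean]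
  have key : ∀ ω : Ω, (a * f ω + b * g ω - (a * Ef + b * Eg)) ^ 2
      = a ^ 2 * (f ω - Ef) ^ 2 + (2 * a * b) * ((f ω - Ef) * (g ω - Eg))
        + b ^ 2 * (g ω - Eg) ^ 2 := by
    intro ω; ring
  simp_rw [key]
  have ha1 : Integrable (fun ω => a ^ 2 * (f ω - Ef) ^ 2) μ := h1.const_mul _
  have ha3 : Integrable (fun ω => (2 * a * b) * ((f ω - Ef) * (g ω - Eg))) μ := h3.const_mul _
  have ha2 : Integrable (fun ω => b ^ 2 * (g ω - Eg) ^ 2) μ := h2.const_mul _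
  have h13 : Integrable (fun ω => a ^ 2 * (f ω - Ef) ^ 2
      + (2 * a * b) * ((f ω - Ef) * (g ω - Eg))) μ := ha1.add ha3
  rw [integral_add h13 ha2, integral_add ha1 ha3, integral_const_mul, integral_const_mul,
    integral_const_mul]
  simp only [cov, ← hEf, ← hEg]

lemma my_variance_comp {E : Type*} [MeasurableSpace E] [IsFiniteMeasure μ]
    {T T' : Ω → E} (hT : Measurable T) (hT' : Measurable T')
    (hmap : Measure.map T μ = Measure.map T' μ)
    {g : E → ℝ} (hg : Measurable g) (hg2 : MemLp (fun ω => g (T' ω)) 2 μ) :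
    variance (fun ω => g (T ω)) μ = variance (fun ω => g (T' ω)) μ
      ∧ MemLp (fun ω => g (T ω)) 2 μ := by
  have hgm : MemLp g 2 (Measure.map T' μ) :=
    (memLp_map_measure_iff hg.aestronglyMeasurable hT'.aemeasurable).2 hg2
  have hgT : MemLp (fun ω => g (T ω)) 2 μ := by
    have : MemLp g 2 (Measure.map T μ) := by rw [hmap]; exact hgm
    exact (memLp_map_measure_iff hg.aestronglyMeasurable hT.aemeasurable).1 this
  have hmean : ∫ ω, g (T ω) ∂μ = ∫ ω, g (T' ω) ∂μ := by
    rw [← integral_map hT.aemeasurable hg.aestronglyMeasurable, hmap,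
      integral_map hT'.aemeasurable hg.aestronglyMeasurable]
  refine ⟨?_, hgT⟩
  rw [my_var_eq hgT, my_var_eq hg2, hmean]
  set c := ∫ ω, g (T' ω) ∂μ
  have hsm : Measurable fun y => (g y - c) ^ 2 := (hg.sub measurable_const).pow_const 2
  rw [← integral_map hT.aemeasurable hsm.aestronglyMeasurable, hmap,
    integral_map hT'.aemeasurable hsm.aestronglyMeasurable]

lemma my_sum_ite_lt {β : Type*} [AddCommMonoid β] (n m : ℕ) (f : ℕ → β) :
    ∑ i ∈ range (n + m), (if i < n then f i else 0) = ∑ i ∈ range n, f i := by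
  rw [Finset.sum_range_add]
  have h1 : ∑ i ∈ range n, (if i < n then f i else 0) = ∑ i ∈ range n, f i :=
    Finset.sum_congr rfl fun i hi => if_pos (Finset.mem_range.1 hi)
  have h2 : ∑ i ∈ range m, (if n + i < n then f (n + i) else 0) = 0 := by
    apply Finset.sum_eq_zero
    intro i _
    exact if_neg (by omega)
  rw [h1, h2, add_zero]

end Helpers

theorem mfmc_optimal_alpha {Ω : Type*} [MeasurableSpace Ω] (μ : Measure Ω)
    [IsProbabilityMeasure μ]
    (n m : ℕ) (hn : 0 < n) (hm : 0 < m)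
    (X Y : Ω → ℝ) (Xs Ys : ℕ → Ω → ℝ)
    (hX : Measurable X) (hY : Measurable Y)
    (hXs : ∀ i, Measurable (Xs i)) (hYs : ∀ i, Measurable (Ys i))
    (hX2 : MemLp X 2 μ) (hY2 : MemLp Y 2 μ)
    (hVarX : 0 < variance X μ) (hVarY : 0 < variance Y μ)
    (hpair : ∀ i < n, Measure.map (fun ω => (Xs i ω, Ys i ω)) μ
        = Measure.map (fun ω => (X ω, Y ω)) μ)
    (hYlaw : ∀ i < n + m, Measure.map (Ys i) μ = Measure.map Y μ)
    (hindep : iIndepFun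
        (fun i : Fin (n + m) => fun ω => (Xs i ω, Ys i ω)) μ) :
    (∀ α : ℝ, variance (mfEst n m Xs Ys (cov X Y μ / variance Y μ)) μ
        ≤ variance (mfEst n m Xs Ys α) μ) ∧
    variance (mfEst n m Xs Ys (cov X Y μ / variance Y μ)) μ
      = variance X μ / n * (1 - (m / (n + m)) * corr X Y μ ^ 2) := by
  set A := cov X Y μ with hA
  set VX := variance X μ with hVX
  set VY := variance Y μ with hVY
  have hnR : (0 : ℝ) < n := by exact_mod_cast hn
  have hnmR : (0 : ℝ) < (n : ℝ) + m := by positivity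
  -- key variance formula
  have key : ∀ α : ℝ, variance (mfEst n m Xs Ys α) μ
      = VX / n + (m / (n * (n + m))) * (α ^ 2 * VY - 2 * α * A) := by
    intro α
    set ca : ℕ → ℝ := fun i => if i < n then ((n : ℝ))⁻¹ else 0 with hca
    set cb : ℕ → ℝ := fun i => if i < n then α * (((n : ℝ) + m)⁻¹ - ((n : ℝ))⁻¹)
      else α * ((n : ℝ) + m)⁻¹ with hcb
    set Z : ℕ → Ω → ℝ := fun i ω => ca i * Xs i ω + cb i * Ys i ω with hZ
    -- representation of the estimator as a sum
    have hrep : mfEst n m Xs Ys α = ∑ i ∈ range (n + m), Z i := by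
      funext ω
      have hsum : (∑ i ∈ range (n + m), Z i) ω = ∑ i ∈ range (n + m), Z i ω :=
        Finset.sum_apply ω _ _
      rw [hsum]
      have hsplit : ∑ i ∈ range (n + m), Z i ω
          = ∑ i ∈ range (n + m), ca i * Xs i ω + ∑ i ∈ range (n + m), cb i * Ys i ω := by
        rw [← Finset.sum_add_distrib]
      rw [hsplit]
      have hXpart : ∑ i ∈ range (n + m), ca i * Xs i ω
          = ((n : ℝ))⁻¹ * ∑ i ∈ range n, Xs i ω := by
        have : ∀ i, ca i * Xs i ω = if i < n then ((n : ℝ))⁻¹ * Xs i ω else 0 := by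
          intro i
          by_cases h : i < n <;> simp [hca, h]
        simp_rw [this]
        rw [my_sum_ite_lt, Finset.mul_sum]
      have hcbi : ∀ i, cb i = α * ((n : ℝ) + m)⁻¹
          - (if i < n then α * ((n : ℝ))⁻¹ else 0) := by
        intro i
        by_cases h : i < n <;> simp [hcb, h] <;> ring
      have hYpart : ∑ i ∈ range (n + m), cb i * Ys i ω
          = α * ((n : ℝ) + m)⁻¹ * ∑ i ∈ range (n + m), Ys i ω
            - α * ((n : ℝ))⁻¹ * ∑ i ∈ range n, Ys i ω := by
        have : ∀ i, cb i * Ys i ω = α * ((n : ℝ) + m)⁻¹ * Ys i ω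
            - (if i < n then α * ((n : ℝ))⁻¹ * Ys i ω else 0) := by
          intro i
          rw [hcbi i]
          by_cases h : i < n <;> simp [h] <;> ring
        simp_rw [this]
        rw [Finset.sum_sub_distrib, my_sum_ite_lt, Finset.mul_sum, Finset.mul_sum]
      rw [hXpart, hYpart]
      simp only [mfEst]
      push_cast
      ring
    -- per-term variances and MemLp
    have hterm : ∀ i ∈ range (n + m),
        variance (Z i) μ
          = (if i < n then
              (((n : ℝ))⁻¹) ^ 2 * VX
                + 2 * ((n : ℝ))⁻¹ * (α * (((n : ℝ) + m)⁻¹ - ((n : ℝ))⁻¹)) * A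
                + (α * (((n : ℝ) + m)⁻¹ - ((n : ℝ))⁻¹)) ^ 2 * VY
            else (α * ((n : ℝ) + m)⁻¹) ^ 2 * VY)
          ∧ MemLp (Z i) 2 μ := by
      intro i hi
      rw [Finset.mem_range] at hi
      by_cases h : i < n
      · have hcai : ca i = ((n : ℝ))⁻¹ := if_pos h
        have hcbi : cb i = α * (((n : ℝ) + m)⁻¹ - ((n : ℝ))⁻¹) := if_pos h
        have hg2 : MemLp (fun ω => ca i * X ω + cb i * Y ω) 2 μ :=
          (hX2.const_mul _).add (hY2.const_mul _)
        have hcomp := my_variance_comp (μ := μ)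
          ((hXs i).prodMk (hYs i)) (hX.prodMk hY) (hpair i h)
          (g := fun p : ℝ × ℝ => ca i * p.1 + cb i * p.2)
          ((measurable_fst.const_mul _).add (measurable_snd.const_mul _)) hg2
        refine ⟨?_, hcomp.2⟩
        rw [if_pos h]
        have := hcomp.1
        rw [show (fun ω => ca i * (Xs i ω, Ys i ω).1 + cb i * (Xs i ω, Ys i ω).2) = Z i from rfl]
          at this
        rw [this, my_variance_lin hX2 hY2, hcai, hcbi]
      · have hcai : ca i = 0 := if_neg h
        have hcbi : cb i = α * ((n : ℝ) + m)⁻¹ := if_neg h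
        have hZi : Z i = fun ω => cb i * Ys i ω := by
          funext ω; simp [hZ, hcai]
        have hg2 : MemLp (fun ω => cb i * Y ω) 2 μ := hY2.const_mul _
        have hcomp := my_variance_comp (μ := μ) (hYs i) hY (hYlaw i hi)
          (g := fun y : ℝ => cb i * y) (measurable_id.const_mul _) hg2
        refine ⟨?_, by rw [hZi]; exact hcomp.2⟩
        rw [if_neg h, hZi, hcomp.1, variance_const_mul, hcbi]
    -- pairwise independence
    have hindepZ : Set.Pairwise ↑(range (n + m)) fun i j => IndepFun (Z i) (Z j) μ := by
      intro i hi j hj hij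
      rw [Finset.coe_range, Set.mem_Iio] at hi hj
      have hind := hindep.indepFun (i := ⟨i, hi⟩) (j := ⟨j, hj⟩)
        (by simpa [Fin.ext_iff] using hij)
      exact hind.comp (φ := fun p : ℝ × ℝ => ca i * p.1 + cb i * p.2)
        (ψ := fun p : ℝ × ℝ => ca j * p.1 + cb j * p.2)
        ((measurable_fst.const_mul _).add (measurable_snd.const_mul _))
        ((measurable_fst.const_mul _).add (measurable_snd.const_mul _))
    rw [hrep, IndepFun.variance_sum (fun i hi => (hterm i hi).2) hindepZ]
    rw [Finset.sum_congr rfl (fun i hi => (hterm i hi).1)]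
    rw [Finset.sum_range_add]
    have h1 : ∑ i ∈ range n, (if i < n then
        (((n : ℝ))⁻¹) ^ 2 * VX
          + 2 * ((n : ℝ))⁻¹ * (α * (((n : ℝ) + m)⁻¹ - ((n : ℝ))⁻¹)) * A
          + (α * (((n : ℝ) + m)⁻¹ - ((n : ℝ))⁻¹)) ^ 2 * VY
      else (α * ((n : ℝ) + m)⁻¹) ^ 2 * VY)
        = n * ((((n : ℝ))⁻¹) ^ 2 * VX
          + 2 * ((n : ℝ))⁻¹ * (α * (((n : ℝ) + m)⁻¹ - ((n : ℝ))⁻¹)) * A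
          + (α * (((n : ℝ) + m)⁻¹ - ((n : ℝ))⁻¹)) ^ 2 * VY) := by
      rw [Finset.sum_congr rfl (fun i hi => if_pos (Finset.mem_range.1 hi)),
        Finset.sum_const, Finset.card_range, nsmul_eq_mul]
    have h2 : ∑ i ∈ range m, (if n + i < n then
        (((n : ℝ))⁻¹) ^ 2 * VX
          + 2 * ((n : ℝ))⁻¹ * (α * (((n : ℝ) + m)⁻¹ - ((n : ℝ))⁻¹)) * A
          + (α * (((n : ℝ) + m)⁻¹ - ((n : ℝ))⁻¹)) ^ 2 * VY
      else (α * ((n : ℝ) + m)⁻¹) ^ 2 * VY)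
        = m * ((α * ((n : ℝ) + m)⁻¹) ^ 2 * VY) := by
      rw [Finset.sum_congr rfl (fun i _ => if_neg (by omega)),
        Finset.sum_const, Finset.card_range, nsmul_eq_mul]
    rw [h1, h2]
    field_simp
    ring
  constructor
  · intro α
    rw [key α, key (A / VY)]
    have hk : (0 : ℝ) ≤ m / (n * (n + m)) := by positivity
    have hsq : (0 : ℝ) ≤ (α * VY - A) ^ 2 / VY := by positivity
    have hexp : (A / VY) ^ 2 * VY - 2 * (A / VY) * A = - (A ^ 2 / VY) := by
      field_simp; ring
    rw [hexp]
    have h2 : α ^ 2 * VY - 2 * α * A - (- (A ^ 2 / VY)) = (α * VY - A) ^ 2 / VY := by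
      field_simp
      ring
    nlinarith [mul_nonneg hk hsq]
  · rw [key (A / VY)]
    have hexp : (A / VY) ^ 2 * VY - 2 * (A / VY) * A = - (A ^ 2 / VY) := by
      field_simp; ring
    rw [hexp]
    have hcorr : corr X Y μ ^ 2 = A ^ 2 / (VX * VY) := by
      rw [corr, div_pow, mul_pow, Real.sq_sqrt hVarX.le, Real.sq_sqrt hVarY.le]
    rw [hcorr]
    field_simp
    ring
end
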